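/- Let A, B ⊆ ℝ² be compact convex sets, each with nonempty interior, and let t ∈ ℝ². Then the interiors of A and of the translate t + B intersect (i.e., interior(A) ∩ interior(t + B) ≠ ∅) if and only if t lies in the interior of the no-fit polygon NFP_{AB} = A + (−B). Consequently, the translate t + B can be placed without overlapping A exactly when t lies on the boundary or in the exterior of NFP_{AB}. -/

import Mathlib

open Set
open scoped Pointwise

section helpers
variable {E : Type*} [NormedAddCommGroup E] [NormedSpace ℝ E]

lemma my_closure_subset_closure_interior {s : Set E} (hs : Convex ℝ s)
    (hne : (interior s).Nonempty) : closure s ⊆ closure (interior s) := by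
  obtain ⟨x, hx⟩ := hne
  intro y hy
  have hseg : openSegment ℝ x y ⊆ interior s :=
    hs.openSegment_interior_closure_subset_interior hx hy
  have hmem : y ∈ closure (openSegment ℝ x y) := by
    have hcont : Filter.Tendsto (fun θ : ℝ => (1 - θ) • x + θ • y) (nhds 1) (nhds y) := by
      have h : Continuous (fun θ : ℝ => (1 - θ) • x + θ • y) := by fun_prop
      have := h.tendsto 1
      simpa using this
    have hcont' : Filter.Tendsto (fun θ : ℝ => (1 - θ) • x + θ • y)
        (nhdsWithin (1:ℝ) (Set.Iio 1)) (nhds y) := hcont.mono_left nhdsWithin_le_nhds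
    refine mem_closure_of_tendsto hcont' ?_
    filter_upwards [Ioo_mem_nhdsLT_of_mem (Set.mem_Ioc.2 ⟨zero_lt_one, le_refl (1:ℝ)⟩)]
      with θ h2
    exact ⟨1 - θ, θ, by linarith [h2.2], h2.1, by ring, rfl⟩
  exact closure_mono hseg hmem

lemma my_interior_closure_subset {s : Set E} (hs : Convex ℝ s)
    (hne : (interior s).Nonempty) : interior (closure s) ⊆ interior s := by
  obtain ⟨x, hx⟩ := hne
  intro y hy
  have hcont : Filter.Tendsto (fun ε : ℝ => y + ε • (y - x)) (nhds 0) (nhds y) := by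
    have h : Continuous (fun ε : ℝ => y + ε • (y - x)) := by fun_prop
    have := h.tendsto 0
    simpa using this
  have hcont' : Filter.Tendsto (fun ε : ℝ => y + ε • (y - x))
      (nhdsWithin (0:ℝ) (Set.Ioi 0)) (nhds y) := hcont.mono_left nhdsWithin_le_nhds
  have hev : ∀ᶠ ε : ℝ in nhdsWithin (0:ℝ) (Set.Ioi 0),
      y + ε • (y - x) ∈ interior (closure s) :=
    hcont'.eventually (isOpen_interior.mem_nhds hy)
  obtain ⟨ε, hεz, hεpos⟩ := (hev.and self_mem_nhdsWithin).exists
  have hz : y + ε • (y - x) ∈ closure s := interior_subset hεz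
  have hεpos' : (0:ℝ) < ε := hεpos
  have h1ε : (0:ℝ) < 1 + ε := by linarith
  have hne' : (1:ℝ) + ε ≠ 0 := ne_of_gt h1ε
  have key := hs.combo_interior_closure_mem_interior hx hz
    (div_pos hεpos' h1ε) (le_of_lt (div_pos one_pos h1ε))
    (by field_simp; ring)
  have heq : (ε / (1 + ε)) • x + (1 / (1 + ε)) • (y + ε • (y - x)) = y := by
    rw [div_eq_mul_inv, div_eq_mul_inv, one_mul]
    match_scalars <;> field_simp <;> ring
  exact heq ▸ key

lemma my_closure_add_closure_subset (s t : Set E) :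
    closure s + closure t ⊆ closure (s + t) := by
  rw [← Set.add_image_prod, ← Set.add_image_prod, ← closure_prod_eq]
  exact (image_closure_subset_closure_image continuous_add).trans (by rfl)

end helpers

/-- The no-fit polygon characterization of overlap: for compact convex sets `A`, `B` in the
plane with nonempty interior, the interiors of `A` and the translate `t +ᵥ B` intersect
iff `t` lies in the interior of the no-fit polygon `A + (-B)`; consequently `t +ᵥ B` can
be placed without overlapping `A` exactly when `t` lies on the frontier or in the exterior
of `A + (-B)`. -/
theorem nfp_interior_overlap_iff (A B : Set (ℝ × ℝ)) (t : ℝ × ℝ)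
    (hAc : IsCompact A) (hAconv : Convex ℝ A) (hAint : (interior A).Nonempty)
    (hBc : IsCompact B) (hBconv : Convex ℝ B) (hBint : (interior B).Nonempty) :
    ((interior A ∩ interior (t +ᵥ B)).Nonempty ↔ t ∈ interior (A + -B)) ∧
    (interior A ∩ interior (t +ᵥ B) = ∅ ↔
      t ∈ frontier (A + -B) ∪ (closure (A + -B))ᶜ) := by
  have hnegint : interior (-B) = -interior B := by
    simp only [← Set.neg_preimage]
    exact ((Homeomorph.neg (ℝ × ℝ)).preimage_interior B).symm
  have hnegne : (interior (-B)).Nonempty := by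
    rw [hnegint]; exact hBint.neg
  -- the open set U
  set U : Set (ℝ × ℝ) := interior A + interior (-B) with hU
  have hUopen : IsOpen U := isOpen_interior.add_right
  have hUconv : Convex ℝ U := hAconv.interior.add (hBconv.neg.interior)
  have hUne : U.Nonempty := hAint.add hnegne
  have hU1 : U ⊆ A + -B := add_subset_add interior_subset interior_subset
  have hsub : A + -B ⊆ closure U := by
    have hA' : A ⊆ closure (interior A) :=
      subset_closure.trans (my_closure_subset_closure_interior hAconv hAint)
    have hB' : -B ⊆ closure (interior (-B)) :=
      subset_closure.trans (my_closure_subset_closure_interior hBconv.neg hnegne)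
    exact (add_subset_add hA' hB').trans (my_closure_add_closure_subset _ _)
  have hUint : (interior U).Nonempty := by rw [hUopen.interior_eq]; exact hUne
  have hIeq : interior (A + -B) = U := by
    apply subset_antisymm
    · calc interior (A + -B) ⊆ interior (closure U) := interior_mono hsub
        _ ⊆ interior U := my_interior_closure_subset hUconv hUint
        _ = U := hUopen.interior_eq
    · rw [← hUopen.interior_eq]; exact interior_mono hU1
  have hvadd : interior (t +ᵥ B) = t +ᵥ interior B := interior_vadd t B
  have hmain : (interior A ∩ interior (t +ᵥ B)).Nonempty ↔ t ∈ interior (A + -B) := by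
    rw [hIeq, hvadd]
    constructor
    · rintro ⟨x, hxA, hxB⟩
      obtain ⟨b, hb, rfl⟩ := hxB
      refine ⟨t + b, by simpa [vadd_eq_add] using hxA, -b, ?_, add_neg_cancel_right t b⟩
      rw [hnegint]; exact Set.neg_mem_neg.mpr hb
    · rintro ⟨a, ha, c, hc, rfl⟩
      rw [hnegint] at hc
      have hc' : -c ∈ interior B := Set.mem_neg.mp hc
      exact ⟨a, ha, -c, hc', show a + c + -c = a from add_neg_cancel_right a c⟩
  refine ⟨hmain, ?_⟩
  rw [← Set.not_nonempty_iff_eq_empty, hmain]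
  constructor
  · intro h
    by_cases hc : t ∈ closure (A + -B)
    · exact Or.inl ⟨hc, h⟩
    · exact Or.inr hc
  · rintro (⟨_, h⟩ | h)
    · exact h
    · exact fun hint => h (subset_closure (interior_subset hint))
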